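/- Let X be a topological space. The quotient group B(X,ℤ)/QZ_b(X) of the group of all bounded functions X → ℤ by the subgroup of bounded residual functions is a free abelian group. -/

import Mathlib

/-- A function `f : X → ℤ` on a topological space is *residual* if `f⁻¹(0)`
contains an open dense subset of `X`. -/
def IsResidualFn {X : Type*} [TopologicalSpace X] (f : X → ℤ) : Prop :=
  ∃ U : Set X, IsOpen U ∧ Dense U ∧ U ⊆ f ⁻¹' {0}

/-- `B(X,ℤ)`: the group of all bounded functions `X → ℤ`, as a subgroup of `X → ℤ`. -/
def boundedFns (X : Type*) : AddSubgroup (X → ℤ) where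
  carrier := {f | ∃ N : ℤ, ∀ x, |f x| ≤ N}
  add_mem' := by
    rintro f g ⟨N, hN⟩ ⟨M, hM⟩
    exact ⟨N + M, fun x => (abs_add_le _ _).trans (add_le_add (hN x) (hM x))⟩
  zero_mem' := ⟨0, fun x => by simp⟩
  neg_mem' := by
    rintro f ⟨N, hN⟩
    exact ⟨N, fun x => by simpa using hN x⟩

/-- `QZ_b(X)`: the group of bounded residual functions, as a subgroup of `X → ℤ`. -/
def residualBoundedFns (X : Type*) [TopologicalSpace X] : AddSubgroup (X → ℤ) where
  carrier := {f | IsResidualFn f ∧ f ∈ boundedFns X}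
  add_mem' := by
    rintro f g ⟨⟨U, hU, hUd, hUf⟩, hfb⟩ ⟨⟨V, hV, hVd, hVg⟩, hgb⟩
    refine ⟨⟨U ∩ V, hU.inter hV, hUd.inter_of_isOpen_left hVd hU, fun x hx => ?_⟩,
      add_mem hfb hgb⟩
    have h1 : f x = 0 := hUf hx.1
    have h2 : g x = 0 := hVg hx.2
    simp [h1, h2]
  zero_mem' := ⟨⟨Set.univ, isOpen_univ, dense_univ, fun x _ => rfl⟩,
    zero_mem (boundedFns X)⟩
  neg_mem' := by
    rintro f ⟨⟨U, hU, hUd, hUf⟩, hfb⟩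
    refine ⟨⟨U, hU, hUd, fun x hx => ?_⟩, neg_mem hfb⟩
    have h1 : f x = 0 := hUf hx
    simp [h1]


open Set Filter Topology

namespace QZFree

variable {α : Type*}

/-- The ultrafilter limit of an integer-valued function. -/
noncomputable def ulim (f : α → ℤ) (U : Ultrafilter α) : ℤ :=
  open Classical in
  if h : ∃ m : ℤ, f ⁻¹' {m} ∈ U then h.choose else 0

lemma ulim_spec {f : α → ℤ} {U : Ultrafilter α} (h : ∃ m : ℤ, f ⁻¹' {m} ∈ U) :
    f ⁻¹' {ulim f U} ∈ U := by
  rw [ulim]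
  rw [dif_pos h]
  exact h.choose_spec

lemma ulim_unique {f : α → ℤ} {U : Ultrafilter α} {m : ℤ} (hm : f ⁻¹' {m} ∈ U) :
    ulim f U = m := by
  have h : ∃ m : ℤ, f ⁻¹' {m} ∈ U := ⟨m, hm⟩
  by_contra hne
  have h2 : f ⁻¹' {ulim f U} ∩ f ⁻¹' {m} ∈ U := inter_mem (ulim_spec h) hm
  have h3 : f ⁻¹' {ulim f U} ∩ f ⁻¹' {m} = ∅ := by
    ext x; simp only [mem_inter_iff, mem_preimage, mem_singleton_iff, mem_empty_iff_false,
      iff_false, not_and]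
    intro h1 h2; exact hne (h1.symm.trans h2)
  rw [h3] at h2
  exact absurd h2 (Filter.empty_notMem (U : Filter α))

lemma exists_ulim {f : α → ℤ} {N : ℤ} (hN : ∀ x, |f x| ≤ N) (U : Ultrafilter α) :
    ∃ m : ℤ, f ⁻¹' {m} ∈ U := by
  have h1 : Set.Icc (-N) N ∈ Ultrafilter.map f U := by
    rw [Ultrafilter.mem_map]
    have : f ⁻¹' Set.Icc (-N) N = univ :=
      eq_univ_of_forall fun x => by simpa [abs_le] using hN x
    rw [this]; exact univ_mem
  obtain ⟨m, -, hm⟩ := Ultrafilter.eq_pure_of_finite_mem (Set.finite_Icc _ _) h1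
  refine ⟨m, ?_⟩
  rw [← Ultrafilter.mem_map, hm]
  simp

lemma ulim_add {f g : α → ℤ} {U : Ultrafilter α} (hf : ∃ m : ℤ, f ⁻¹' {m} ∈ U)
    (hg : ∃ m : ℤ, g ⁻¹' {m} ∈ U) : ulim (f + g) U = ulim f U + ulim g U := by
  refine ulim_unique (mem_of_superset (inter_mem (ulim_spec hf) (ulim_spec hg)) ?_)
  rintro x ⟨h1, h2⟩
  simp only [mem_preimage, mem_singleton_iff] at h1 h2 ⊢
  simp [h1, h2]

/-- For an open set `V` of ultrafilters and `U ∈ V`, the set of points whose principal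
ultrafilter lies in `V` belongs to `U`. -/
lemma pure_preimage_mem {U : Ultrafilter α} {V : Set (Ultrafilter α)} (hV : IsOpen V)
    (hU : U ∈ V) : (pure · ∈ V : Set α) ∈ U := by
  obtain ⟨v, ⟨s, rfl⟩, hUs, hsV⟩ := ultrafilterBasis_is_basis.exists_subset_of_mem_open hU hV
  refine mem_of_superset hUs fun x hx => ?_
  exact hsV (by simpa using hx)

/-- Separation by a clopen set in a profinite space. -/
lemma exists_isClopen_sep {Z : Type*} [TopologicalSpace Z] [CompactSpace Z] [T2Space Z]
    [TotallyDisconnectedSpace Z] {A B : Set Z} (hA : IsCompact A) (hB : IsClosed B)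
    (hAB : Disjoint A B) : ∃ V : Set Z, IsClopen V ∧ A ⊆ V ∧ Disjoint V B := by
  have key : ∀ a : A, ∃ V : Set Z, IsClopen V ∧ (a : Z) ∈ V ∧ V ⊆ Bᶜ := fun a =>
    compact_exists_isClopen_in_isOpen hB.isOpen_compl
      (by simpa using (Set.disjoint_left.1 hAB) a.2)
  choose W hW1 hW2 hW3 using key
  obtain ⟨t, ht⟩ := hA.elim_finite_subcover W (fun a => (hW1 a).2)
    (fun x hx => mem_iUnion.2 ⟨⟨x, hx⟩, hW2 _⟩)
  refine ⟨⋃ a ∈ t, W a, isClopen_biUnion_finset fun a _ => hW1 a, ht, ?_⟩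
  rw [Set.disjoint_left]
  intro x hx hxB
  simp only [Set.mem_iUnion] at hx
  obtain ⟨a, -, ha⟩ := hx
  exact hW3 a ha hxB


variable {X : Type*} [TopologicalSpace X]

/-- Ultrafilters containing every dense open set. -/
def Ypts (X : Type*) [TopologicalSpace X] : Set (Ultrafilter X) :=
  {U | ∀ D : Set X, IsOpen D → Dense D → D ∈ U}

lemma isClosed_Ypts : IsClosed (Ypts X) := by
  have : Ypts X = ⋂ D ∈ {D : Set X | IsOpen D ∧ Dense D}, {U : Ultrafilter X | D ∈ U} := by
    ext U
    simp only [Ypts, mem_setOf_eq, mem_iInter]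
    exact ⟨fun h D hD => h D hD.1 hD.2, fun h D h1 h2 => h D ⟨h1, h2⟩⟩
  rw [this]
  exact isClosed_biInter fun D _ => ultrafilter_isClosed_basic D

instance : CompactSpace (Ypts X) :=
  isCompact_iff_compactSpace.1 (isClosed_Ypts.isCompact)

/-- The limit map `B(X,ℤ) → LocallyConstant (Ypts X) ℤ` as a function. -/
noncomputable def phiFun (f : boundedFns X) : LocallyConstant (Ypts X) ℤ where
  toFun := fun U => ulim (f : X → ℤ) (U : Ultrafilter X)
  isLocallyConstant := by
    obtain ⟨N, hN⟩ := f.2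
    have key : ∀ m : ℤ, (fun U : Ypts X => ulim (f : X → ℤ) (U : Ultrafilter X)) ⁻¹' {m} =
        (Subtype.val) ⁻¹' {U : Ultrafilter X | (f : X → ℤ) ⁻¹' {m} ∈ U} := by
      intro m
      ext U
      simp only [mem_preimage, mem_singleton_iff, mem_setOf_eq]
      constructor
      · rintro rfl; exact ulim_spec (exists_ulim hN U.1)
      · exact ulim_unique
    intro s
    have : (fun U : Ypts X => ulim (f : X → ℤ) (U : Ultrafilter X)) ⁻¹' s =
        ⋃ m ∈ s, (fun U : Ypts X => ulim (f : X → ℤ) (U : Ultrafilter X)) ⁻¹' {m} := by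
      ext U; simp
    rw [this]
    refine isOpen_biUnion fun m _ => ?_
    rw [key m]
    exact (ultrafilter_isOpen_basic _).preimage continuous_subtype_val

/-- The limit map as an additive group homomorphism. -/
noncomputable def Phi (X : Type*) [TopologicalSpace X] :
    boundedFns X →+ LocallyConstant (Ypts X) ℤ :=
  AddMonoidHom.mk' phiFun (by
    intro f g
    ext U
    obtain ⟨Nf, hNf⟩ := f.2
    obtain ⟨Ng, hNg⟩ := g.2
    exact ulim_add (exists_ulim hNf U.1) (exists_ulim hNg U.1))

lemma Phi_apply (f : boundedFns X) (U : Ypts X) :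
    Phi X f U = ulim (f : X → ℤ) (U : Ultrafilter X) := rfl

lemma ker_Phi :
    (Phi X).ker = (residualBoundedFns X).addSubgroupOf (boundedFns X) := by
  ext f
  rw [AddMonoidHom.mem_ker, AddSubgroup.mem_addSubgroupOf]
  obtain ⟨N, hN⟩ := f.2
  constructor
  · intro h
    refine ⟨?_, f.2⟩
    by_contra hres
    -- build an ultrafilter containing all dense open sets and the complement of f⁻¹(0)
    set S : Set (Set X) := insert ((f : X → ℤ) ⁻¹' {0})ᶜ {D : Set X | IsOpen D ∧ Dense D}
      with hS
    have hfip : ∀ t, t ⊆ S → t.Finite → (⋂₀ t).Nonempty := by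
      intro t hts htf
      have hsub : ((f : X → ℤ) ⁻¹' {0})ᶜ ∩ ⋂₀ (t ∩ {D : Set X | IsOpen D ∧ Dense D}) ⊆ ⋂₀ t := by
        rintro x ⟨hx1, hx2⟩ e he
        rcases hts he with he' | he'
        · rwa [← he'] at hx1
        · exact hx2 e ⟨he, he'⟩
      have hD : IsOpen (⋂₀ (t ∩ {D : Set X | IsOpen D ∧ Dense D})) ∧
          Dense (⋂₀ (t ∩ {D : Set X | IsOpen D ∧ Dense D})) := by
        refine Set.Finite.induction_on
          (motive := fun u _ => u ⊆ {D : Set X | IsOpen D ∧ Dense D} →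
            IsOpen (⋂₀ u) ∧ Dense (⋂₀ u)) _
          (htf.inter_of_left _) (fun _ => by
            simp only [sInter_empty]
            exact ⟨isOpen_univ, dense_univ⟩) ?_ (Set.inter_subset_right)
        intro a u _ _ ih hins
        rw [Set.insert_subset_iff] at hins
        obtain ⟨h1, h2⟩ := ih hins.2
        rw [sInter_insert]
        exact ⟨hins.1.1.inter h1, hins.1.2.inter_of_isOpen_left h2 hins.1.1⟩
      -- if the intersection with the complement were empty, f would be residual
      rcases Set.eq_empty_or_nonempty
        (((f : X → ℤ) ⁻¹' {0})ᶜ ∩ ⋂₀ (t ∩ {D : Set X | IsOpen D ∧ Dense D})) with hemp | hne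
      · exfalso
        apply hres
        refine ⟨⋂₀ (t ∩ {D : Set X | IsOpen D ∧ Dense D}), hD.1, hD.2, ?_⟩
        intro x hx
        by_contra hx0
        exact absurd hemp (Set.nonempty_iff_ne_empty.1 ⟨x, hx0, hx⟩)
      · exact hne.mono hsub
    have hne : (Filter.generate S).NeBot := Filter.generate_neBot_iff.2 hfip
    obtain ⟨U, hU⟩ := Ultrafilter.exists_le (Filter.generate S)
    have hUY : U ∈ Ypts X := fun D h1 h2 =>
      hU (Filter.mem_generate_of_mem (Set.mem_insert_of_mem _ ⟨h1, h2⟩))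
    have hc : ((f : X → ℤ) ⁻¹' {0})ᶜ ∈ U :=
      hU (Filter.mem_generate_of_mem (Set.mem_insert _ _))
    have h0 : (f : X → ℤ) ⁻¹' {0} ∈ U := by
      have := congrFun (congrArg DFunLike.coe h) ⟨U, hUY⟩
      rw [Phi_apply] at this
      simp only [LocallyConstant.coe_zero, Pi.zero_apply] at this
      have h2 := ulim_spec (exists_ulim hN U)
      rwa [this] at h2
    exact absurd (inter_mem h0 hc) (by simp [Filter.empty_notMem])
  · rintro ⟨⟨D, hD1, hD2, hD3⟩, -⟩
    ext U
    rw [Phi_apply]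
    simp only [LocallyConstant.coe_zero, Pi.zero_apply]
    exact ulim_unique (Filter.mem_of_superset (U.2 D hD1 hD2) hD3)

lemma Phi_surjective : Function.Surjective (Phi X) := by
  classical
  intro g
  have hfin : (Set.range g).Finite := g.range_finite
  set s : Finset ℤ := hfin.toFinset with hs
  -- the fibers of g, as compact subsets of the ultrafilter space
  set C : ℤ → Set (Ultrafilter X) := fun m => Subtype.val '' ((g : Ypts X → ℤ) ⁻¹' {m})
    with hC
  have hfibclosed : ∀ m, IsClosed ((g : Ypts X → ℤ) ⁻¹' {m}) := by
    intro m
    have : ((g : Ypts X → ℤ) ⁻¹' {m})ᶜ = (g : Ypts X → ℤ) ⁻¹' ({m}ᶜ) := by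
      ext; simp
    rw [← isOpen_compl_iff, this]
    exact g.isLocallyConstant _
  have hCcpt : ∀ m, IsCompact (C m) := fun m =>
    ((hfibclosed m).isCompact).image continuous_subtype_val
  have hCdisj : ∀ m m', m ≠ m' → Disjoint (C m) (C m') := by
    intro m m' hmm
    rw [Set.disjoint_left]
    rintro x ⟨U, hU, rfl⟩ ⟨V, hV, hUV⟩
    have : U = V := Subtype.val_injective hUV.symm
    rw [this] at hU
    simp only [mem_preimage, mem_singleton_iff] at hU hV
    exact hmm (hU.symm.trans hV)
  -- separate each fiber from the union of the others by a clopen set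
  have hsep : ∀ m ∈ s, ∃ W : Set (Ultrafilter X), IsClopen W ∧ C m ⊆ W ∧
      Disjoint W (⋃ m' ∈ s.erase m, C m') := by
    intro m hm
    have hBc : IsCompact (⋃ m' ∈ s.erase m, C m') :=
      (s.erase m).isCompact_biUnion (fun m' _ => hCcpt m')
    have hdisj2 : Disjoint (C m) (⋃ m' ∈ s.erase m, C m') := by
      rw [Set.disjoint_left]
      intro x hx hx'
      simp only [Set.mem_iUnion] at hx'
      obtain ⟨m', hm', hxm'⟩ := hx'
      exact Set.disjoint_left.1 (hCdisj m m' (Finset.ne_of_mem_erase hm').symm) hx hxm'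
    exact exists_isClopen_sep (hCcpt m) hBc.isClosed hdisj2
  choose! W hW1 hW2 hW3 using hsep
  -- disjointify
  set V : ℤ → Set (Ultrafilter X) := fun m => W m \ ⋃ m' ∈ s.filter (· < m), W m' with hV
  have hVclopen : ∀ m ∈ s, IsClopen (V m) := by
    intro m hm
    exact (hW1 m hm).diff (isClopen_biUnion_finset fun m' hm' =>
      hW1 m' (Finset.mem_of_mem_filter m' hm'))
  have hCV : ∀ m ∈ s, C m ⊆ V m := by
    intro m hm x hx
    refine ⟨hW2 m hm hx, ?_⟩
    simp only [Set.mem_iUnion, not_exists]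
    intro m' hm'
    have hm's : m' ∈ s := Finset.mem_of_mem_filter m' hm'
    have hne : m' ≠ m := ne_of_lt (Finset.mem_filter.1 hm').2
    intro hxW
    have hxB : x ∈ ⋃ m'' ∈ s.erase m', C m'' := by
      simp only [Set.mem_iUnion]
      exact ⟨m, Finset.mem_erase.2 ⟨fun h => hne h.symm, hm⟩, hx⟩
    exact Set.disjoint_left.1 (hW3 m' hm's) hxW hxB
  have hVdisj : ∀ m ∈ s, ∀ m' ∈ s, m ≠ m' → Disjoint (V m) (V m') := by
    have key : ∀ m ∈ s, ∀ m' ∈ s, m < m' → Disjoint (V m) (V m') := by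
      intro m hm m' hm' hlt
      rw [Set.disjoint_left]
      rintro x ⟨hxW, -⟩ ⟨-, hxnot⟩
      simp only [Set.mem_iUnion, not_exists] at hxnot
      exact hxnot m (Finset.mem_filter.2 ⟨hm, hlt⟩) hxW
    intro m hm m' hm' hne
    rcases lt_or_gt_of_ne hne with h | h
    · exact key m hm m' hm' h
    · exact (key m' hm' m hm h).symm
  -- the candidate function on X
  set f : X → ℤ := fun x => ∑ m ∈ s, if (pure x : Ultrafilter X) ∈ V m then m else 0 with hf
  have hfb : f ∈ boundedFns X := by
    refine ⟨∑ m ∈ s, |m|, fun x => ?_⟩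
    refine (Finset.abs_sum_le_sum_abs _ _).trans (Finset.sum_le_sum fun m _ => ?_)
    split <;> simp [abs_nonneg]
  refine ⟨⟨f, hfb⟩, ?_⟩
  ext U
  rw [Phi_apply]
  have hgU : g U ∈ s := by rw [hs]; exact hfin.mem_toFinset.2 ⟨U, rfl⟩
  have hUC : (U : Ultrafilter X) ∈ C (g U) := ⟨U, by simp, rfl⟩
  have hUV : (U : Ultrafilter X) ∈ V (g U) := hCV _ hgU hUC
  refine ulim_unique (Filter.mem_of_superset
    (pure_preimage_mem (hVclopen _ hgU).2 hUV) ?_)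
  intro x hx
  have hx' : (pure x : Ultrafilter X) ∈ V (g U) := hx
  show (∑ m ∈ s, if (pure x : Ultrafilter X) ∈ V m then m else 0) = g U
  rw [Finset.sum_eq_single_of_mem (g U) hgU]
  · rw [if_pos hx']
  · intro m hm hne
    rw [if_neg]
    exact fun hxm => Set.disjoint_left.1 (hVdisj m hm (g U) hgU hne) hxm hx'

end QZFree

/-- The quotient `B(X,ℤ)/QZ_b(X)` is a free abelian group. -/
theorem quotient_bounded_by_residual_free (X : Type*) [TopologicalSpace X] :
    Module.Free ℤ
      (boundedFns X ⧸ (residualBoundedFns X).addSubgroupOf (boundedFns X)) := by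
  letI : TotallyDisconnectedSpace (QZFree.Ypts X) := Subtype.totallyDisconnectedSpace
  have e : (boundedFns X ⧸ (residualBoundedFns X).addSubgroupOf (boundedFns X)) ≃+
      LocallyConstant (QZFree.Ypts X) ℤ :=
    (QuotientAddGroup.quotientAddEquivOfEq QZFree.ker_Phi.symm).trans
      (QuotientAddGroup.quotientKerEquivOfSurjective _ QZFree.Phi_surjective)
  have hfree : Module.Free ℤ (LocallyConstant (QZFree.Ypts X) ℤ) := by
    have := LocallyConstant.freeOfProfinite (Profinite.of (QZFree.Ypts X))
    exact this
  -- transfer the module instance (all `ℤ`-module structures agree)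
  refine Module.Free.of_equiv' (R := ℤ) ?_ e.symm.toIntLinearEquiv
  rw [show (AddCommGroup.toIntModule (LocallyConstant (QZFree.Ypts X) ℤ)) =
      (inferInstance : Module ℤ (LocallyConstant (QZFree.Ypts X) ℤ)) from
    (AddCommGroup.uniqueIntModule.uniq _).trans (AddCommGroup.uniqueIntModule.uniq _).symm]
  exact hfree
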